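/- In the scalar Gaussian observation model, the conditional expectation of the state given one noisy observation is linear: E[V | σ(X)] = (σ² / (σ² + q²)) · X almost surely. -/

import Mathlib

open MeasureTheory ProbabilityTheory

open Real
open scoped NNReal ENNReal


lemma integrable_id_gaussianReal0 (v : ℝ≥0) (hv : v ≠ 0) :
    Integrable (fun x : ℝ => x) (gaussianReal 0 v) := by
  rw [gaussianReal_of_var_ne_zero _ hv,
    integrable_withDensity_iff (measurable_gaussianPDF 0 v)
      (ae_of_all _ fun x => ENNReal.ofReal_lt_top)]
  have hv' : (0 : ℝ) < v := NNReal.coe_pos.mpr (pos_iff_ne_zero.mpr hv)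
  have h := (integrable_mul_exp_neg_mul_sq (b := 1 / (2 * (v : ℝ))) (by positivity)).const_mul
    ((Real.sqrt (2 * π * v))⁻¹)
  refine h.congr (ae_of_all _ fun x => ?_)
  simp only [gaussianPDF_def]
  rw [ENNReal.toReal_ofReal (gaussianPDFReal_nonneg _ _ _)]
  simp only [gaussianPDFReal]
  have : rexp (-(1 / (2 * (v : ℝ))) * x ^ 2) = rexp (-(x - 0) ^ 2 / (2 * (v : ℝ))) := by
    congr 1; field_simp; ring
  rw [this]; ring

lemma gaussian_prod_withDensity (σv qv : ℝ≥0) (hσ : σv ≠ 0) (hq : qv ≠ 0) :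
    (gaussianReal 0 σv).prod (gaussianReal 0 qv)
      = (volume.prod volume).withDensity
          (fun p : ℝ × ℝ => gaussianPDF 0 σv p.1 * gaussianPDF 0 qv p.2) := by
  refine Measure.prod_eq fun s t hs ht => ?_
  rw [withDensity_apply _ (hs.prod ht), ← Measure.prod_restrict,
    lintegral_prod_mul (measurable_gaussianPDF 0 σv).aemeasurable
      (measurable_gaussianPDF 0 qv).aemeasurable,
    gaussianReal_apply _ hσ, gaussianReal_apply _ hq]

section Involution

variable (c : ℝ)

/-- the measure-preserving linear involution used for the symmetry argument. -/
noncomputable def invL : (ℝ × ℝ) →ₗ[ℝ] (ℝ × ℝ) where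
  toFun p := ((2 * c - 1) * p.1 + 2 * c * p.2, (2 - 2 * c) * p.1 + (1 - 2 * c) * p.2)
  map_add' p r := by
    simp only [Prod.fst_add, Prod.snd_add, Prod.mk_add_mk, Prod.mk.injEq]
    constructor <;> ring
  map_smul' a p := by
    simp only [Prod.smul_fst, Prod.smul_snd, smul_eq_mul, RingHom.id_apply, Prod.smul_mk,
      Prod.mk.injEq]
    constructor <;> ring

lemma invL_invol (p : ℝ × ℝ) : invL c (invL c p) = p := by
  simp only [invL, LinearMap.coe_mk, AddHom.coe_mk]
  ext <;> dsimp <;> ring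

lemma invL_det_sq : LinearMap.det (invL c) * LinearMap.det (invL c) = 1 := by
  have h2 : (invL c).comp (invL c) = LinearMap.id := LinearMap.ext fun p => by
    simpa using invL_invol c p
  rw [← LinearMap.det_comp, h2, LinearMap.det_id]

lemma map_invL_volume : Measure.map (invL c) (volume : Measure (ℝ × ℝ)) = volume := by
  have hdet : LinearMap.det (invL c) ≠ 0 := by
    intro h
    have := invL_det_sq c
    rw [h, mul_zero] at this
    exact zero_ne_one this
  rw [Measure.map_linearMap_addHaar_eq_smul_addHaar (μ := volume) hdet]
  rcases mul_self_eq_one_iff.mp (invL_det_sq c) with h | h <;> rw [h] <;> norm_num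

/-- the involution as a measurable equiv -/
noncomputable def invE : (ℝ × ℝ) ≃ᵐ (ℝ × ℝ) where
  toFun := invL c
  invFun := invL c
  left_inv := invL_invol c
  right_inv := invL_invol c
  measurable_toFun := (invL c).continuous_of_finiteDimensional.measurable
  measurable_invFun := (invL c).continuous_of_finiteDimensional.measurable

lemma integral_comp_invL (F : ℝ × ℝ → ℝ) :
    ∫ p, F (invL c p) ∂(volume : Measure (ℝ × ℝ)) = ∫ p, F p ∂(volume : Measure (ℝ × ℝ)) := by
  have h := MeasureTheory.integral_map_equiv (μ := (volume : Measure (ℝ × ℝ))) (invE c) F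
  have hmap : Measure.map (⇑(invE c)) (volume : Measure (ℝ × ℝ)) = volume := map_invL_volume c
  rw [hmap] at h
  exact h.symm

end Involution

/-- in the scalar Gaussian observation model (`V ~ N(0, σ²)` and
`W ~ N(0, q²)` independent, observation `X = V + W`), the conditional expectation of
the state given the observation is linear: `E[V | σ(X)] = (σ² / (σ² + q²)) · X`
almost surely. -/
theorem condexp_state_given_observation_linear
    {Ω : Type*} [MeasurableSpace Ω] (μ : Measure Ω) [IsProbabilityMeasure μ]
    (σ q : ℝ) (hσ : 0 < σ) (hq : 0 < q)
    (V W : Ω → ℝ) (hV : Measurable V) (hW : Measurable W)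
    (hindep : IndepFun V W μ)
    (hVlaw : μ.map V = gaussianReal 0 ⟨σ ^ 2, sq_nonneg σ⟩)
    (hWlaw : μ.map W = gaussianReal 0 ⟨q ^ 2, sq_nonneg q⟩) :
    μ[V | MeasurableSpace.comap (fun ω => V ω + W ω) inferInstance]
      =ᵐ[μ] fun ω => σ ^ 2 / (σ ^ 2 + q ^ 2) * (V ω + W ω) := by
  set σv : ℝ≥0 := ⟨σ ^ 2, sq_nonneg σ⟩ with hσvdef
  set qv : ℝ≥0 := ⟨q ^ 2, sq_nonneg q⟩ with hqvdef
  have hσv : σv ≠ 0 := by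
    rw [← NNReal.coe_ne_zero]
    exact (by positivity : (0:ℝ) < σ ^ 2).ne'
  have hqv : qv ≠ 0 := by
    rw [← NNReal.coe_ne_zero]
    exact (by positivity : (0:ℝ) < q ^ 2).ne'
  have hσvc : (σv : ℝ) = σ ^ 2 := rfl
  have hqvc : (qv : ℝ) = q ^ 2 := rfl
  have hs2 : (0:ℝ) < σ ^ 2 + q ^ 2 := by positivity
  set c : ℝ := σ ^ 2 / (σ ^ 2 + q ^ 2) with hcdef
  set X : Ω → ℝ := fun ω => V ω + W ω with hXdef
  have hX : Measurable X := hV.add hW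
  -- integrability
  have hVint : Integrable V μ := by
    have h := integrable_id_gaussianReal0 σv hσv
    rw [← hVlaw] at h
    exact (integrable_map_measure aestronglyMeasurable_id hV.aemeasurable).mp h
  have hWint : Integrable W μ := by
    have h := integrable_id_gaussianReal0 qv hqv
    rw [← hWlaw] at h
    exact (integrable_map_measure aestronglyMeasurable_id hW.aemeasurable).mp h
  -- joint law
  set ν : Measure (ℝ × ℝ) := (gaussianReal 0 σv).prod (gaussianReal 0 qv) with hνdef
  set pr : Ω → ℝ × ℝ := fun ω => (V ω, W ω) with hprdef
  have hpr : Measurable pr := hV.prodMk hW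
  have hmappr : μ.map pr = ν := by
    rw [hνdef, ← hVlaw, ← hWlaw]
    exact (indepFun_iff_map_prod_eq_prod_map_map hV.aemeasurable hW.aemeasurable).mp hindep
  -- integrability of coordinates under ν
  have Ifst : Integrable (fun p : ℝ × ℝ => p.1) ν := by
    have hm : ν.map Prod.fst = gaussianReal 0 σv := by
      rw [hνdef, Measure.map_fst_prod]; simp
    have h := integrable_id_gaussianReal0 σv hσv
    rw [← hm] at h
    exact (integrable_map_measure aestronglyMeasurable_id measurable_fst.aemeasurable).mp h
  have Isnd : Integrable (fun p : ℝ × ℝ => p.2) ν := by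
    have hm : ν.map Prod.snd = gaussianReal 0 qv := by
      rw [hνdef, Measure.map_snd_prod]; simp
    have h := integrable_id_gaussianReal0 qv hqv
    rw [← hm] at h
    exact (integrable_map_measure aestronglyMeasurable_id measurable_snd.aemeasurable).mp h
  -- the key vanishing integral
  have key : ∀ A : Set ℝ, MeasurableSet A →
      ∫ p in ((fun p : ℝ × ℝ => p.1 + p.2) ⁻¹' A), (q ^ 2 * p.1 - σ ^ 2 * p.2) ∂ν = 0 := by
    intro A hA
    set B : Set (ℝ × ℝ) := (fun p : ℝ × ℝ => p.1 + p.2) ⁻¹' A with hBdef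
    have hB : MeasurableSet B := (measurable_fst.add measurable_snd) hA
    set d : ℝ × ℝ → ℝ := fun p => gaussianPDFReal 0 σv p.1 * gaussianPDFReal 0 qv p.2 with hddef
    have hdmeas : Measurable fun p : ℝ × ℝ => Real.toNNReal (d p) :=
      (((measurable_gaussianPDFReal 0 σv).comp measurable_fst).mul
        ((measurable_gaussianPDFReal 0 qv).comp measurable_snd)).real_toNNReal
    have hν2 : ν = (volume.prod volume).withDensity
        (fun p : ℝ × ℝ => ((Real.toNNReal (d p) : ℝ≥0) : ℝ≥0∞)) := by
      rw [hνdef, gaussian_prod_withDensity σv qv hσv hqv]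
      congr 1
      funext p
      rw [gaussianPDF_def]
      simp only
      rw [gaussianPDF_def]
      simp only
      rw [← ENNReal.ofReal_mul (gaussianPDFReal_nonneg _ _ _)]
      rfl
    set H : ℝ × ℝ → ℝ := B.indicator (fun p : ℝ × ℝ => q ^ 2 * p.1 - σ ^ 2 * p.2) with hHdef
    rw [← integral_indicator hB, ← hHdef, hν2,
      integral_withDensity_eq_integral_smul hdmeas H]
    set F : ℝ × ℝ → ℝ := fun p => Real.toNNReal (d p) • H p with hFdef
    have hd_inv : ∀ p : ℝ × ℝ, d (invL c p) = d p := by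
      intro p
      have hexp : rexp (-((((2 * c - 1) * p.1 + 2 * c * p.2) : ℝ) - 0) ^ 2 / (2 * (σv : ℝ)))
            * rexp (-((((2 - 2 * c) * p.1 + (1 - 2 * c) * p.2) : ℝ) - 0) ^ 2 / (2 * (qv : ℝ)))
          = rexp (-(p.1 - 0) ^ 2 / (2 * (σv : ℝ))) * rexp (-(p.2 - 0) ^ 2 / (2 * (qv : ℝ))) := by
        rw [← Real.exp_add, ← Real.exp_add]
        congr 1
        rw [hσvc, hqvc, hcdef]
        field_simp
        ring
      simp only [hddef, invL, LinearMap.coe_mk, AddHom.coe_mk, gaussianPDFReal]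
      linear_combination (Real.sqrt (2 * π * (σv : ℝ)))⁻¹ * (Real.sqrt (2 * π * (qv : ℝ)))⁻¹ * hexp
    have hsum_inv : ∀ p : ℝ × ℝ, (invL c p).1 + (invL c p).2 = p.1 + p.2 := by
      intro p
      simp only [invL, LinearMap.coe_mk, AddHom.coe_mk]
      ring
    have hval_inv : ∀ p : ℝ × ℝ,
        q ^ 2 * (invL c p).1 - σ ^ 2 * (invL c p).2 = -(q ^ 2 * p.1 - σ ^ 2 * p.2) := by
      intro p
      simp only [invL, LinearMap.coe_mk, AddHom.coe_mk, hcdef]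
      field_simp
      ring
    have hFS : ∀ p : ℝ × ℝ, F (invL c p) = - F p := by
      intro p
      have hHinv : H (invL c p) = - H p := by
        by_cases hp : p ∈ B
        · have hmem : invL c p ∈ B := by
            simp only [hBdef, Set.mem_preimage] at hp ⊢
            rw [hsum_inv p]; exact hp
          rw [hHdef, Set.indicator_of_mem hmem, Set.indicator_of_mem hp, hval_inv p]
        · have hmem : invL c p ∉ B := by
            simp only [hBdef, Set.mem_preimage] at hp ⊢
            rw [hsum_inv p]; exact hp
          rw [hHdef, Set.indicator_of_notMem hmem, Set.indicator_of_notMem hp, neg_zero]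
      simp only [hFdef, hd_inv p, hHinv, smul_eq_mul, NNReal.smul_def, mul_neg]
    have hI : ∫ p, F p ∂(volume : Measure (ℝ × ℝ))
        = - ∫ p, F p ∂(volume : Measure (ℝ × ℝ)) := by
      conv_lhs => rw [← integral_comp_invL c F]
      simp_rw [hFS]
      rw [integral_neg]
    have hvol : (volume : Measure (ℝ × ℝ)) = (volume : Measure ℝ).prod volume := rfl
    rw [← hvol]
    linarith [hI]
  -- conditional expectation characterization
  have hm : MeasurableSpace.comap X inferInstance ≤ (inferInstance : MeasurableSpace Ω) :=
    hX.comap_le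
  refine (ae_eq_condExp_of_forall_setIntegral_eq hm hVint ?_ ?_ ?_).symm
  · intro s _ _
    exact ((hVint.add hWint).const_mul c).integrableOn
  · intro s hs _
    obtain ⟨A, hA, rfl⟩ := hs
    set B : Set (ℝ × ℝ) := (fun p : ℝ × ℝ => p.1 + p.2) ⁻¹' A with hBdef
    have hB : MeasurableSet B := (measurable_fst.add measurable_snd) hA
    have e2 : ∫ ω in X ⁻¹' A, V ω ∂μ = ∫ p in B, p.1 ∂ν := by
      rw [← hmappr]
      exact (setIntegral_map hB measurable_fst.aestronglyMeasurable hpr.aemeasurable).symm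
    have e3 : ∫ ω in X ⁻¹' A, (fun ω => c * (V ω + W ω)) ω ∂μ
        = ∫ p in B, c * (p.1 + p.2) ∂ν := by
      rw [← hmappr]
      exact (setIntegral_map hB
        ((measurable_fst.add measurable_snd).const_mul c).aestronglyMeasurable
        hpr.aemeasurable).symm
    rw [e3, e2]
    have hkey := key A hA
    calc ∫ p in B, c * (p.1 + p.2) ∂ν
        = ∫ p in B, (p.1 - (σ ^ 2 + q ^ 2)⁻¹ * (q ^ 2 * p.1 - σ ^ 2 * p.2)) ∂ν := by
          refine integral_congr_ae (ae_of_all _ fun p => ?_)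
          rw [hcdef]
          field_simp
          ring
      _ = (∫ p in B, p.1 ∂ν)
            - ∫ p in B, (σ ^ 2 + q ^ 2)⁻¹ * (q ^ 2 * p.1 - σ ^ 2 * p.2) ∂ν := by
          exact integral_sub Ifst.integrableOn
            ((((Ifst.const_mul (q ^ 2)).sub (Isnd.const_mul (σ ^ 2))).const_mul
              ((σ ^ 2 + q ^ 2)⁻¹)).integrableOn)
      _ = ∫ p in B, p.1 ∂ν := by
          rw [integral_const_mul, hkey, mul_zero, sub_zero]
  · exact StronglyMeasurable.aestronglyMeasurable
      (((measurable_iff_comap_le.mpr le_rfl).const_mul c).stronglyMeasurable)
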